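/- The 2D Stokeslet pressure field p(x) = (r·λ)/(2πρ²), with r = x − c and ρ = |r|, is harmonic on ℝ² \ {c}. -/

import Mathlib

open Real

lemma second_deriv_aux (c1 A l B t : ℝ) (h : (t - c1) ^ 2 + B ≠ 0) :
    deriv (fun s : ℝ => deriv (fun s' : ℝ =>
        ((s' - c1) * l + A) / (2 * π * ((s' - c1) ^ 2 + B))) s) t
    = (2 * l * (t - c1) ^ 3 - 6 * l * B * (t - c1) + 6 * A * (t - c1) ^ 2 - 2 * A * B)
        / (2 * π * ((t - c1) ^ 2 + B) ^ 3) := by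
  have hπ := Real.pi_ne_zero
  have hU : IsOpen {s : ℝ | (s - c1) ^ 2 + B ≠ 0} := by
    have hc : Continuous fun s : ℝ => (s - c1) ^ 2 + B := by continuity
    exact isOpen_compl_singleton.preimage hc
  have hev : ∀ᶠ s in nhds t, deriv (fun s' : ℝ =>
      ((s' - c1) * l + A) / (2 * π * ((s' - c1) ^ 2 + B))) s
      = (l * ((s - c1) ^ 2 + B) - ((s - c1) * l + A) * (2 * (s - c1)))
          / (2 * π * ((s - c1) ^ 2 + B) ^ 2) := by
    filter_upwards [hU.mem_nhds h] with s hs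
    have hd : 2 * π * ((s - c1) ^ 2 + B) ≠ 0 :=
      mul_ne_zero (mul_ne_zero two_ne_zero hπ) hs
    have hnum : HasDerivAt (fun s' : ℝ => (s' - c1) * l + A) l s := by
      simpa using (((hasDerivAt_id s).sub_const c1).mul_const l).add_const A
    have hden : HasDerivAt (fun s' : ℝ => 2 * π * ((s' - c1) ^ 2 + B))
        (2 * π * (2 * (s - c1))) s := by
      have h1 := ((((hasDerivAt_id s).sub_const c1).pow 2).add_const B).const_mul (2 * π)
      simpa using h1.congr_deriv (by simp)
    rw [(hnum.fun_div hden hd).deriv]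
    field_simp
  rw [Filter.EventuallyEq.deriv_eq hev]
  have h1 : HasDerivAt (fun s : ℝ => s - c1) 1 t := (hasDerivAt_id t).sub_const c1
  have hG : HasDerivAt (fun s : ℝ =>
      l * ((s - c1) ^ 2 + B) - ((s - c1) * l + A) * (2 * (s - c1)))
      (l * (2 * (t - c1)) - (l * (2 * (t - c1)) + ((t - c1) * l + A) * 2)) t := by
    have hA : HasDerivAt (fun s : ℝ => l * ((s - c1) ^ 2 + B)) (l * (2 * (t - c1))) t := by
      have := ((h1.pow 2).add_const B).const_mul l
      simpa using this.congr_deriv (by simp)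
    have hB : HasDerivAt (fun s : ℝ => ((s - c1) * l + A) * (2 * (s - c1)))
        (l * (2 * (t - c1)) + ((t - c1) * l + A) * 2) t := by
      have := ((h1.mul_const l).add_const A).fun_mul (h1.const_mul 2)
      simpa using this.congr_deriv (by simp)
    exact hA.sub hB
  have hH : HasDerivAt (fun s : ℝ => 2 * π * ((s - c1) ^ 2 + B) ^ 2)
      (2 * π * (2 * ((t - c1) ^ 2 + B) * (2 * (t - c1)))) t := by
    have := (((h1.pow 2).add_const B).pow 2).const_mul (2 * π)
    simpa using this.congr_deriv (by simp)
  have hHne : 2 * π * ((t - c1) ^ 2 + B) ^ 2 ≠ 0 :=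
    mul_ne_zero (mul_ne_zero two_ne_zero hπ) (pow_ne_zero 2 h)
  rw [(hG.fun_div hH hHne).deriv]
  field_simp
  ring

/-- The 2D Stokeslet pressure field `p(x) = (r·λ)/(2πρ²)`, with `r = x − c` and
`ρ = |r|`, is harmonic on `ℝ² \ {c}`: `∂₁₁p + ∂₂₂p = 0`. -/
theorem stokeslet_pressure_harmonic (c lam : ℝ × ℝ) (x : ℝ × ℝ) (hx : x ≠ c) :
    deriv (fun s : ℝ => deriv (fun s' : ℝ =>
        ((s' - c.1) * lam.1 + (x.2 - c.2) * lam.2) /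
          (2 * π * ((s' - c.1) ^ 2 + (x.2 - c.2) ^ 2))) s) x.1
      + deriv (fun s : ℝ => deriv (fun s' : ℝ =>
        ((x.1 - c.1) * lam.1 + (s' - c.2) * lam.2) /
          (2 * π * ((x.1 - c.1) ^ 2 + (s' - c.2) ^ 2))) s) x.2 = 0 := by
  have hρ : (x.1 - c.1) ^ 2 + (x.2 - c.2) ^ 2 ≠ 0 := by
    intro h0
    apply hx
    have h1 : (x.1 - c.1) ^ 2 = 0 := by nlinarith [sq_nonneg (x.1 - c.1), sq_nonneg (x.2 - c.2)]
    have h2 : (x.2 - c.2) ^ 2 = 0 := by nlinarith [sq_nonneg (x.1 - c.1), sq_nonneg (x.2 - c.2)]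
    have e1 : x.1 = c.1 := by nlinarith [sq_nonneg (x.1 - c.1)]
    have e2 : x.2 = c.2 := by nlinarith [sq_nonneg (x.2 - c.2)]
    exact Prod.ext e1 e2
  have key1 := second_deriv_aux c.1 ((x.2 - c.2) * lam.2) lam.1 ((x.2 - c.2) ^ 2) x.1 hρ
  have hρ' : (x.2 - c.2) ^ 2 + (x.1 - c.1) ^ 2 ≠ 0 := by rwa [add_comm]
  have key2 := second_deriv_aux c.2 ((x.1 - c.1) * lam.1) lam.2 ((x.1 - c.1) ^ 2) x.2 hρ'
  have e2 : (fun s : ℝ => deriv (fun s' : ℝ =>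
        ((x.1 - c.1) * lam.1 + (s' - c.2) * lam.2) /
          (2 * π * ((x.1 - c.1) ^ 2 + (s' - c.2) ^ 2))) s)
      = (fun s : ℝ => deriv (fun s' : ℝ =>
        ((s' - c.2) * lam.2 + (x.1 - c.1) * lam.1) /
          (2 * π * ((s' - c.2) ^ 2 + (x.1 - c.1) ^ 2))) s) := by
    funext s
    congr 1
    funext s'
    ring_nf
  rw [e2, key1, key2]
  have hπ := Real.pi_ne_zero
  field_simp
  ring
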